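/- For every natural number n and real p with 0 < p ≤ 1, the first-moment weighted sum ∑_{m=0}^∞ m · |(np)^m/m! · e^{-np} − C(n,m) p^m (1−p)^{n−m}| is at most 2np². -/

import Mathlib

open Real Finset

/-- Elementary key inequality: `u - q ≤ u * (log u - log q)` for positive `u, q`. -/
private lemma log_key {u q : ℝ} (hu : 0 < u) (hq : 0 < q) :
    u - q ≤ u * (Real.log u - Real.log q) := by
  have h1 : Real.log (q / u) ≤ q / u - 1 := Real.log_le_sub_one_of_pos (div_pos hq hu)
  have h2 : Real.log (q / u) = Real.log q - Real.log u := Real.log_div hq.ne' hu.ne'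
  have h3 : u * (q / u) = q := by field_simp
  nlinarith [mul_le_mul_of_nonneg_left h1 hu.le]

/-- Discrete integral comparison:
`j + (n-j) * (log(n-j) - log n) ≤ ∑_{i<j} (log n - log (n-1-i))`. -/
private lemma sum_log_lb (n : ℕ) : ∀ j : ℕ, j < n →
    (j : ℝ) + ((n : ℝ) - j) * (Real.log ((n : ℝ) - j) - Real.log n) ≤
      ∑ i ∈ Finset.range j, (Real.log n - Real.log ((n : ℝ) - 1 - i)) := by
  intro j
  induction j with
  | zero => intro _; simp
  | succ j ih =>
    intro hj
    have hj' : j < n := Nat.lt_of_succ_lt hj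
    have h2 : (2 : ℝ) ≤ (n : ℝ) - j := by
      have hle : j + 2 ≤ n := by omega
      have : (j : ℝ) + 2 ≤ (n : ℝ) := by exact_mod_cast hle
      linarith
    have hkey : (1 : ℝ) ≤ ((n : ℝ) - j) * (Real.log ((n : ℝ) - j) - Real.log ((n : ℝ) - 1 - j)) := by
      have := log_key (u := (n : ℝ) - j) (q := (n : ℝ) - 1 - j) (by linarith) (by linarith)
      linarith
    have hIH := ih hj'
    rw [Finset.sum_range_succ]
    have hcast : ((j + 1 : ℕ) : ℝ) = (j : ℝ) + 1 := by push_cast; ring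
    rw [hcast]
    have he : (n : ℝ) - ((j : ℝ) + 1) = (n : ℝ) - 1 - (j : ℝ) := by ring
    rw [he]
    linarith

/-- Pointwise comparison: `(1-p) · Bin(n-1,p)(j) ≤ Poi(np)(j)`. -/
private lemma pointwise_le (n : ℕ) (hn : 1 ≤ n) (p : ℝ) (hp : 0 < p) (hp1 : p ≤ 1) (j : ℕ) :
    (1 - p) * (((n - 1).choose j : ℝ) * p ^ j * (1 - p) ^ (n - 1 - j)) ≤
      ((n : ℝ) * p) ^ j / (Nat.factorial j) * Real.exp (-((n : ℝ) * p)) := by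
  have hnp : 0 ≤ (n : ℝ) * p := by positivity
  have hRHS : 0 ≤ ((n : ℝ) * p) ^ j / (Nat.factorial j) * Real.exp (-((n : ℝ) * p)) := by
    positivity
  by_cases hjn : n ≤ j
  · have : (n - 1).choose j = 0 := Nat.choose_eq_zero_of_lt (by omega)
    rw [this]
    simpa using hRHS
  push_neg at hjn
  rcases eq_or_lt_of_le hp1 with hp1' | hp1'
  · rw [← hp1']
    simpa using hRHS
  -- main case : j < n, 0 < p < 1
  have h1p : (0 : ℝ) < 1 - p := by linarith
  have hnR : (0 : ℝ) < n := by exact_mod_cast hn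
  have hjR : (j : ℝ) < (n : ℝ) := by exact_mod_cast hjn
  -- reduce to descFactorial inequality
  set D : ℕ := (n - 1).descFactorial j with hD
  have hDfac : (D : ℝ) = (Nat.factorial j : ℝ) * ((n - 1).choose j : ℝ) := by
    rw [hD, Nat.descFactorial_eq_factorial_mul_choose]; push_cast; ring
  have hDpos : 0 < D := by
    rw [hD]
    rcases Nat.eq_zero_or_pos ((n - 1).descFactorial j) with h | h
    · exfalso; have := Nat.descFactorial_eq_zero_iff_lt.mp h; omega
    · exact h
  have hDposR : (0 : ℝ) < D := by exact_mod_cast hDpos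
  -- D as a real product
  have hDprod : (D : ℝ) = ∏ i ∈ Finset.range j, ((n : ℝ) - 1 - i) := by
    rw [hD, Nat.descFactorial_eq_prod_range]
    push_cast [Nat.cast_prod]
    refine Finset.prod_congr rfl fun i hi => ?_
    have hi' : i < j := Finset.mem_range.mp hi
    have : i + 1 ≤ n - 1 + 1 := by omega
    have h1 : i ≤ n - 1 := by omega
    rw [Nat.cast_sub h1]
    push_cast [Nat.cast_sub hn]
    ring
  have hfacpos : ∀ i ∈ Finset.range j, (0 : ℝ) < (n : ℝ) - 1 - i := by
    intro i hi
    have hi' : i < j := Finset.mem_range.mp hi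
    have : (i : ℝ) + 1 < (n : ℝ) := by
      have : i + 1 < n := by omega
      exact_mod_cast this
    linarith
  -- key inequality on logs
  have hlogD : Real.log (D : ℝ) = ∑ i ∈ Finset.range j, Real.log ((n : ℝ) - 1 - i) := by
    rw [hDprod]
    exact Real.log_prod fun i hi => (hfacpos i hi).ne'
  have hsum := sum_log_lb n j hjn
  have hsum' : Real.log (D : ℝ) ≤
      (j : ℝ) * Real.log n - ((j : ℝ) + ((n : ℝ) - j) * (Real.log ((n : ℝ) - j) - Real.log n)) := by
    have : ∑ i ∈ Finset.range j, (Real.log n - Real.log ((n : ℝ) - 1 - i)) =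
        (j : ℝ) * Real.log n - ∑ i ∈ Finset.range j, Real.log ((n : ℝ) - 1 - i) := by
      rw [Finset.sum_sub_distrib, Finset.sum_const, Finset.card_range, nsmul_eq_mul]
    rw [this] at hsum
    linarith [hlogD, hsum]
  have hkey2 := log_key (u := (n : ℝ) - j) (q := (n : ℝ) * (1 - p)) (by linarith)
    (by positivity)
  have hlogq : Real.log ((n : ℝ) * (1 - p)) = Real.log n + Real.log (1 - p) :=
    Real.log_mul hnR.ne' h1p.ne'
  -- core : log (D * (1-p)^(n-j)) ≤ log (n^j * exp (-np))
  have hcore : Real.log (D : ℝ) + ((n : ℝ) - j) * Real.log (1 - p) ≤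
      (j : ℝ) * Real.log n + (-((n : ℝ) * p)) := by
    have hexp : ((n : ℝ) - j) - (n : ℝ) * (1 - p) = (n : ℝ) * p - j := by ring
    rw [hlogq] at hkey2
    nlinarith [hsum', hkey2]
  -- exponentiate
  have hmain : (D : ℝ) * (1 - p) ^ (n - j) ≤ (n : ℝ) ^ j * Real.exp (-((n : ℝ) * p)) := by
    have hL : (0 : ℝ) < (D : ℝ) * (1 - p) ^ (n - j) := by positivity
    have hR : (0 : ℝ) < (n : ℝ) ^ j * Real.exp (-((n : ℝ) * p)) := by positivity
    rw [← Real.log_le_log_iff hL hR, Real.log_mul hDposR.ne' (by positivity),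
      Real.log_mul (by positivity) (Real.exp_pos _).ne', Real.log_pow, Real.log_pow,
      Real.log_exp]
    have hcast : ((n - j : ℕ) : ℝ) = (n : ℝ) - j := by
      rw [Nat.cast_sub hjn.le]
    rw [hcast]
    exact hcore
  -- put things back together
  have hpowsplit : (1 - p) * (1 - p) ^ (n - 1 - j) = (1 - p) ^ (n - j) := by
    have : n - j = (n - 1 - j) + 1 := by omega
    rw [this, pow_succ]
    ring
  have hfj : (0 : ℝ) < (Nat.factorial j : ℝ) := by exact_mod_cast j.factorial_pos
  have hpj : (0 : ℝ) < p ^ j := by positivity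
  have hmul := mul_le_mul_of_nonneg_right hmain (le_of_lt (by positivity : (0:ℝ) < p ^ j / (Nat.factorial j)))
  calc (1 - p) * (((n - 1).choose j : ℝ) * p ^ j * (1 - p) ^ (n - 1 - j))
      = ((D : ℝ) * (1 - p) ^ (n - j)) * (p ^ j / (Nat.factorial j)) := by
        rw [hDfac, ← hpowsplit]; field_simp
    _ ≤ ((n : ℝ) ^ j * Real.exp (-((n : ℝ) * p))) * (p ^ j / (Nat.factorial j)) := hmul
    _ = ((n : ℝ) * p) ^ j / (Nat.factorial j) * Real.exp (-((n : ℝ) * p)) := by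
        rw [mul_pow]; ring

/-- First-moment weighted comparison of the Poisson distribution with mean `n*p`
and the binomial distribution with parameters `n, p`: the sum
`∑ m, m * |Poisson(np)(m) - Binomial(n,p)(m)|` is at most `2*n*p^2`.
Here `Nat.choose n m = 0` for `m > n`. -/
theorem poisson_binomial_first_moment_le (n : ℕ) (p : ℝ) (hp : 0 < p) (hp1 : p ≤ 1) :
    ∑' m : ℕ, (m : ℝ) * |((n : ℝ) * p) ^ m / (Nat.factorial m) * Real.exp (-((n : ℝ) * p)) -
      (n.choose m : ℝ) * p ^ m * (1 - p) ^ (n - m)| ≤ 2 * n * p ^ 2 := by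
  rcases Nat.eq_zero_or_pos n with hn | hn
  · subst hn
    have hzero : ∀ m : ℕ, (m : ℝ) * |((0 : ℕ) : ℝ) * p ^ m / (Nat.factorial m) * 0 - 0| = 0 := by
      intro m; simp
    have : ∀ m : ℕ, (m : ℝ) * |(((0 : ℕ) : ℝ) * p) ^ m / (Nat.factorial m) *
        Real.exp (-(((0 : ℕ) : ℝ) * p)) - ((Nat.choose 0 m : ℕ) : ℝ) * p ^ m * (1 - p) ^ (0 - m)| = 0 := by
      intro m
      cases m with
      | zero => simp
      | succ k =>
        have h1 : (((0 : ℕ) : ℝ) * p) ^ (k + 1) = 0 := by norm_num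
        have h2 : Nat.choose 0 (k + 1) = 0 := Nat.choose_eq_zero_of_lt (by omega)
        rw [h1, h2]
        simp
    rw [tsum_congr this]
    simp
  -- main case n ≥ 1
  have hnR : (0 : ℝ) < n := by exact_mod_cast hn
  have h1p : (0 : ℝ) ≤ 1 - p := by linarith
  set f : ℕ → ℝ := fun j => ((n : ℝ) * p) ^ j / (Nat.factorial j) * Real.exp (-((n : ℝ) * p))
    with hf
  set g : ℕ → ℝ := fun j => ((n - 1).choose j : ℝ) * p ^ j * (1 - p) ^ (n - 1 - j) with hg
  have hf0 : ∀ j, 0 ≤ f j := fun j => by rw [hf]; positivity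
  have hg0 : ∀ j, 0 ≤ g j := fun j => by rw [hg]; positivity
  have sf : Summable f := by
    rw [hf]
    exact (Real.summable_pow_div_factorial ((n : ℝ) * p)).mul_right _
  have hgz : ∀ j ∉ Finset.range n, g j = 0 := by
    intro j hj
    have : n ≤ j := by simpa using hj
    have : (n - 1).choose j = 0 := Nat.choose_eq_zero_of_lt (by omega)
    rw [hg]; simp [this]
  have sg : Summable g := summable_of_ne_finset_zero hgz
  have htf : ∑' j, f j = 1 := by
    rw [hf, tsum_mul_right]
    have : ∑' j : ℕ, ((n : ℝ) * p) ^ j / (Nat.factorial j) = Real.exp ((n : ℝ) * p) := by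
      rw [Real.exp_eq_exp_ℝ, NormedSpace.exp_eq_tsum_div]
    rw [this, ← Real.exp_add]
    simp
  have htg : ∑' j, g j = 1 := by
    rw [tsum_eq_sum hgz]
    have hrange : Finset.range n = Finset.range ((n - 1) + 1) := by
      congr 1; omega
    rw [hrange]
    calc ∑ j ∈ Finset.range ((n - 1) + 1), g j
        = ∑ j ∈ Finset.range ((n - 1) + 1), p ^ j * (1 - p) ^ ((n - 1) - j) * ((n - 1).choose j : ℝ) :=
          Finset.sum_congr rfl fun j _ => by show ((n-1).choose j : ℝ) * p ^ j * (1 - p) ^ (n - 1 - j) = _; ring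
      _ = (p + (1 - p)) ^ (n - 1) := (add_pow p (1 - p) (n - 1)).symm
      _ = 1 := by norm_num
  set w : ℕ → ℝ := fun j => |f j - g j| with hw
  have sw : Summable w := by
    apply Summable.of_nonneg_of_le (fun j => abs_nonneg _) (fun j => ?_) (sf.add sg)
    show |f j - g j| ≤ f j + g j
    exact abs_le.mpr ⟨by nlinarith [hf0 j, hg0 j], by nlinarith [hf0 j, hg0 j]⟩
  have hwle : ∀ j, w j ≤ (f j - g j) + 2 * p * g j := by
    intro j
    have hpt := pointwise_le n hn p hp hp1 j
    show |f j - g j| ≤ f j - g j + 2 * p * g j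
    have hfg : (1 - p) * g j ≤ f j := hpt
    rcases abs_cases (f j - g j) with ⟨h, _⟩ | ⟨h, _⟩
    · rw [h]; nlinarith [hg0 j]
    · rw [h]; nlinarith [hg0 j]
  have hsb : Summable fun j => (f j - g j) + 2 * p * g j :=
    (sf.sub sg).add ((sg.mul_left (2 * p)))
  have htw : ∑' j, w j ≤ 2 * p := by
    calc ∑' j, w j ≤ ∑' j, ((f j - g j) + 2 * p * g j) := Summable.tsum_le_tsum hwle sw hsb
      _ = (∑' j, (f j - g j)) + ∑' j, 2 * p * g j := Summable.tsum_add (sf.sub sg) (sg.mul_left (2 * p))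
      _ = ((∑' j, f j) - ∑' j, g j) + 2 * p * ∑' j, g j := by rw [Summable.tsum_sub sf sg, tsum_mul_left]
      _ = 2 * p := by rw [htf, htg]; ring
  -- reindexing
  set F : ℕ → ℝ := fun m => (m : ℝ) * |((n : ℝ) * p) ^ m / (Nat.factorial m) *
    Real.exp (-((n : ℝ) * p)) - (n.choose m : ℝ) * p ^ m * (1 - p) ^ (n - m)| with hF
  have hF0 : F 0 = 0 := by simp only [hF]; simp
  have hFsucc : ∀ m : ℕ, F (m + 1) = ((n : ℝ) * p) * w m := by
    intro m
    simp only [hF, hw, hf, hg]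
    have hm1 : (0 : ℝ) ≤ ((m + 1 : ℕ) : ℝ) := by positivity
    have hA : ((m + 1 : ℕ) : ℝ) * (((n : ℝ) * p) ^ (m + 1) / (Nat.factorial (m + 1))) =
        ((n : ℝ) * p) * (((n : ℝ) * p) ^ m / (Nat.factorial m)) := by
      rw [Nat.factorial_succ]
      have h1 : (Nat.factorial m : ℝ) ≠ 0 := by exact_mod_cast m.factorial_pos.ne'
      push_cast
      field_simp
      ring
    have hchoose : (n : ℝ) * ((n - 1).choose m : ℝ) = (n.choose (m + 1) : ℝ) * ((m + 1 : ℕ) : ℝ) := by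
      have h := Nat.add_one_mul_choose_eq (n - 1) m
      have hn1 : n - 1 + 1 = n := by omega
      rw [hn1] at h
      exact_mod_cast h
    have hsub : n - (m + 1) = n - 1 - m := by omega
    have hB : ((m + 1 : ℕ) : ℝ) * ((n.choose (m + 1) : ℝ) * p ^ (m + 1) * (1 - p) ^ (n - (m + 1))) =
        ((n : ℝ) * p) * (((n - 1).choose m : ℝ) * p ^ m * (1 - p) ^ (n - 1 - m)) := by
      rw [hsub, pow_succ]
      have h2 : ((m + 1 : ℕ) : ℝ) * (n.choose (m + 1) : ℝ) = (n : ℝ) * ((n - 1).choose m : ℝ) := by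
        rw [hchoose]; ring
      calc ((m + 1 : ℕ) : ℝ) * ((n.choose (m + 1) : ℝ) * (p ^ m * p) * (1 - p) ^ (n - 1 - m))
          = (((m + 1 : ℕ) : ℝ) * (n.choose (m + 1) : ℝ)) * (p ^ m * p) * (1 - p) ^ (n - 1 - m) := by
            ring
        _ = ((n : ℝ) * ((n - 1).choose m : ℝ)) * (p ^ m * p) * (1 - p) ^ (n - 1 - m) := by rw [h2]
        _ = (n : ℝ) * p * (((n - 1).choose m : ℝ) * p ^ m * (1 - p) ^ (n - 1 - m)) := by ring
    have key : ((m + 1 : ℕ) : ℝ) * (((n : ℝ) * p) ^ (m + 1) / (Nat.factorial (m + 1)) *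
        Real.exp (-((n : ℝ) * p)) - (n.choose (m + 1) : ℝ) * p ^ (m + 1) * (1 - p) ^ (n - (m + 1))) =
        ((n : ℝ) * p) * (((n : ℝ) * p) ^ m / (Nat.factorial m) * Real.exp (-((n : ℝ) * p)) -
          ((n - 1).choose m : ℝ) * p ^ m * (1 - p) ^ (n - 1 - m)) := by
      rw [mul_sub, mul_sub, hB, show ((m + 1 : ℕ) : ℝ) * (((n : ℝ) * p) ^ (m + 1) /
        (Nat.factorial (m + 1)) * Real.exp (-((n : ℝ) * p))) = (((m + 1 : ℕ) : ℝ) *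
        (((n : ℝ) * p) ^ (m + 1) / (Nat.factorial (m + 1)))) * Real.exp (-((n : ℝ) * p)) from by
          ring, hA]
      ring
    calc ((m + 1 : ℕ) : ℝ) * |((n : ℝ) * p) ^ (m + 1) / (Nat.factorial (m + 1)) *
          Real.exp (-((n : ℝ) * p)) - (n.choose (m + 1) : ℝ) * p ^ (m + 1) * (1 - p) ^ (n - (m + 1))|
        = |((m + 1 : ℕ) : ℝ) * (((n : ℝ) * p) ^ (m + 1) / (Nat.factorial (m + 1)) *
            Real.exp (-((n : ℝ) * p)) - (n.choose (m + 1) : ℝ) * p ^ (m + 1) *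
            (1 - p) ^ (n - (m + 1)))| := by
          rw [abs_mul, abs_of_nonneg hm1]
      _ = |((n : ℝ) * p) * (((n : ℝ) * p) ^ m / (Nat.factorial m) * Real.exp (-((n : ℝ) * p)) -
            ((n - 1).choose m : ℝ) * p ^ m * (1 - p) ^ (n - 1 - m))| := by rw [key]
      _ = ((n : ℝ) * p) * |((n : ℝ) * p) ^ m / (Nat.factorial m) * Real.exp (-((n : ℝ) * p)) -
            ((n - 1).choose m : ℝ) * p ^ m * (1 - p) ^ (n - 1 - m)| := by
          rw [abs_mul, abs_of_nonneg (by positivity : (0:ℝ) ≤ (n : ℝ) * p)]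
  have sF : Summable F := by
    apply (_root_.summable_nat_add_iff 1).mp
    have heq : (fun m => F (m + 1)) = fun m => ((n : ℝ) * p) * w m := funext hFsucc
    rw [heq]
    exact sw.mul_left _
  have hFt : ∑' m, F m = ((n : ℝ) * p) * ∑' j, w j := by
    rw [Summable.tsum_eq_zero_add sF, hF0]
    have heq : (fun m => F (m + 1)) = fun m => ((n : ℝ) * p) * w m := funext hFsucc
    rw [heq, tsum_mul_left]
    ring
  calc ∑' m, F m = ((n : ℝ) * p) * ∑' j, w j := hFt
    _ ≤ ((n : ℝ) * p) * (2 * p) := mul_le_mul_of_nonneg_left htw (by positivity)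
    _ = 2 * n * p ^ 2 := by ring
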